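/- The following equations hold in F[a,b,c] ⊗ U(sl₂): A♮ = (1⊗y + a⊗1)(1⊗y + (a+1)⊗1) + 2⊗yν_x + 2(c+a−b+1)⊗ν_x, and B♮ = (1⊗y − b⊗1)(1⊗y − (b+1)⊗1) − 2⊗yν_z − 2(a−b−c−1)⊗ν_z. -/
import Mathlib


open scoped TensorProduct

noncomputable section

namespace RacahPaper

variable (F : Type) [Field F]

/-- Defining relations of `U(sl₂)`: generators `e = ι 0`, `f = ι 1`, `h = ι 2` with
`he - eh = 2e`, `hf - fh = -2f`, `ef - fe = h`. -/
inductive slRel : FreeAlgebra F (Fin 3) → FreeAlgebra F (Fin 3) → Prop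
  | he : slRel (FreeAlgebra.ι F 2 * FreeAlgebra.ι F 0 - FreeAlgebra.ι F 0 * FreeAlgebra.ι F 2)
      (2 * FreeAlgebra.ι F 0)
  | hf : slRel (FreeAlgebra.ι F 2 * FreeAlgebra.ι F 1 - FreeAlgebra.ι F 1 * FreeAlgebra.ι F 2)
      (-(2 * FreeAlgebra.ι F 1))
  | ef : slRel (FreeAlgebra.ι F 0 * FreeAlgebra.ι F 1 - FreeAlgebra.ι F 1 * FreeAlgebra.ι F 0)
      (FreeAlgebra.ι F 2)

/-- The universal enveloping algebra `U(sl₂)`. -/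
abbrev U := RingQuot (slRel F)

/-- The generator `e` of `U(sl₂)`. -/
def e : U F := RingQuot.mkAlgHom F (slRel F) (FreeAlgebra.ι F 0)

/-- The generator `f` of `U(sl₂)`. -/
def f : U F := RingQuot.mkAlgHom F (slRel F) (FreeAlgebra.ι F 1)

/-- The generator `h` of `U(sl₂)`. -/
def h : U F := RingQuot.mkAlgHom F (slRel F) (FreeAlgebra.ι F 2)

/-- The equitable generator `x = -f - h/2`. -/
def ux : U F := -f F - (2 : F)⁻¹ • h F

/-- The equitable generator `y = h/2`. -/
def uy : U F := (2 : F)⁻¹ • h F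

/-- The equitable generator `z = e - h/2`. -/
def uz : U F := e F - (2 : F)⁻¹ • h F

/-- The normalized Casimir element `Λ = ef + h(h-2)/4` of `U(sl₂)`. -/
def Lam : U F := e F * f F + (4 : F)⁻¹ • (h F * (h F - 2))

/-- `ν_x = f/2`. -/
def nux : U F := (2 : F)⁻¹ • f F

/-- `ν_z = e/2`. -/
def nuz : U F := (2 : F)⁻¹ • e F

/-- `U_n`: the span of the `e^i h^j f^k` with `k - i = n`. -/
def Usub (n : ℤ) : Submodule F (U F) :=
  Submodule.span F {u : U F | ∃ i j k : ℕ, (k : ℤ) - (i : ℤ) = n ∧ u = e F ^ i * h F ^ j * f F ^ k}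

-- Racah algebra
/-- Generator `A` of the free algebra. -/
def fA : FreeAlgebra F (Fin 4) := FreeAlgebra.ι F 0
/-- Generator `B` of the free algebra. -/
def fB : FreeAlgebra F (Fin 4) := FreeAlgebra.ι F 1
/-- Generator `C` of the free algebra. -/
def fC : FreeAlgebra F (Fin 4) := FreeAlgebra.ι F 2
/-- Generator `D` of the free algebra. -/
def fD : FreeAlgebra F (Fin 4) := FreeAlgebra.ι F 3

/-- `α = [A,D] + AC - BA` in the free algebra. -/
def falpha : FreeAlgebra F (Fin 4) := (fA F * fD F - fD F * fA F) + fA F * fC F - fB F * fA F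
/-- `β = [B,D] + BA - CB` in the free algebra. -/
def fbeta : FreeAlgebra F (Fin 4) := (fB F * fD F - fD F * fB F) + fB F * fA F - fC F * fB F
/-- `γ = [C,D] + CB - AC` in the free algebra. -/
def fgamma : FreeAlgebra F (Fin 4) := (fC F * fD F - fD F * fC F) + fC F * fB F - fA F * fC F

/-- Defining relations of the Racah algebra: `[A,B] = [B,C] = [C,A] = 2D` and each of
`α, β, γ` commutes with each of the generators `A, B, C, D`. -/
inductive racahRel : FreeAlgebra F (Fin 4) → FreeAlgebra F (Fin 4) → Prop
  | AB : racahRel (fA F * fB F - fB F * fA F) (2 * fD F)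
  | BC : racahRel (fB F * fC F - fC F * fB F) (2 * fD F)
  | CA : racahRel (fC F * fA F - fA F * fC F) (2 * fD F)
  | calpha (i : Fin 4) : racahRel (falpha F * FreeAlgebra.ι F i) (FreeAlgebra.ι F i * falpha F)
  | cbeta (i : Fin 4) : racahRel (fbeta F * FreeAlgebra.ι F i) (FreeAlgebra.ι F i * fbeta F)
  | cgamma (i : Fin 4) : racahRel (fgamma F * FreeAlgebra.ι F i) (FreeAlgebra.ι F i * fgamma F)

/-- The Racah algebra `ℜ`. -/
abbrev Racah := RingQuot (racahRel F)

/-- Generator `A` of the Racah algebra. -/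
def A : Racah F := RingQuot.mkAlgHom F (racahRel F) (fA F)
/-- Generator `B` of the Racah algebra. -/
def B : Racah F := RingQuot.mkAlgHom F (racahRel F) (fB F)
/-- Generator `C` of the Racah algebra. -/
def C : Racah F := RingQuot.mkAlgHom F (racahRel F) (fC F)
/-- Generator `D` of the Racah algebra. -/
def D : Racah F := RingQuot.mkAlgHom F (racahRel F) (fD F)

/-- `α = [A,D] + AC - BA` in the Racah algebra. -/
def alpha : Racah F := (A F * D F - D F * A F) + A F * C F - B F * A F
/-- `β = [B,D] + BA - CB` in the Racah algebra. -/
def beta : Racah F := (B F * D F - D F * B F) + B F * A F - C F * B F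
/-- `γ = [C,D] + CB - AC` in the Racah algebra. -/
def gamma : Racah F := (C F * D F - D F * C F) + C F * B F - A F * C F
/-- `δ = A + B + C` in the Racah algebra. -/
def delta : Racah F := A F + B F + C F

/-- `Ω_A = D² + (BAC + CAB)/2 + A² + Bγ - Cβ - Aδ`. -/
def OmegaA : Racah F :=
  D F ^ 2 + (2 : F)⁻¹ • (B F * A F * C F + C F * A F * B F) + A F ^ 2
    + B F * gamma F - C F * beta F - A F * delta F

/-- `Ω_B = D² + (CBA + ABC)/2 + B² + Cα - Aγ - Bδ`. -/
def OmegaB : Racah F :=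
  D F ^ 2 + (2 : F)⁻¹ • (C F * B F * A F + A F * B F * C F) + B F ^ 2
    + C F * alpha F - A F * gamma F - B F * delta F

/-- `Ω_C = D² + (ACB + BCA)/2 + C² + Aβ - Bα - Cδ`. -/
def OmegaC : Racah F :=
  D F ^ 2 + (2 : F)⁻¹ • (A F * C F * B F + B F * C F * A F) + C F ^ 2
    + A F * beta F - B F * alpha F - C F * delta F

-- the tensor algebra F[a,b,c] ⊗ U(sl2)
/-- The polynomial algebra `F[a,b,c]`. -/
abbrev P := MvPolynomial (Fin 3) F

/-- The tensor product algebra `F[a,b,c] ⊗ U(sl₂)`. -/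
abbrev T := P F ⊗[F] U F

/-- The indeterminate `a`. -/
def pa : P F := MvPolynomial.X 0
/-- The indeterminate `b`. -/
def pb : P F := MvPolynomial.X 1
/-- The indeterminate `c`. -/
def pc : P F := MvPolynomial.X 2

/-- `A♮`. -/
def Anat : T F :=
  (pa F * (pa F + 1)) ⊗ₜ[F] (1 : U F) + (pb F - pc F - pa F) ⊗ₜ[F] ux F
    + (pa F + pb F - pc F + 1) ⊗ₜ[F] uy F - (1 : P F) ⊗ₜ[F] (ux F * uy F)

/-- `B♮`. -/
def Bnat : T F :=
  (pb F * (pb F + 1)) ⊗ₜ[F] (1 : U F) + (pc F - pa F - pb F) ⊗ₜ[F] uy F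
    + (pb F + pc F - pa F + 1) ⊗ₜ[F] uz F - (1 : P F) ⊗ₜ[F] (uy F * uz F)

/-- `C♮`. -/
def Cnat : T F :=
  (pc F * (pc F + 1)) ⊗ₜ[F] (1 : U F) + (pa F - pb F - pc F) ⊗ₜ[F] uz F
    + (pc F + pa F - pb F + 1) ⊗ₜ[F] ux F - (1 : P F) ⊗ₜ[F] (uz F * ux F)

/-- `D♮`. -/
def Dnat : T F :=
  (1 : P F) ⊗ₜ[F] (uz F * uy F * ux F + uz F * ux F)
    + (pc F + pb F * (pc F + pa F - pb F)) ⊗ₜ[F] ux F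
    + (pa F + pc F * (pa F + pb F - pc F)) ⊗ₜ[F] uy F
    + (pb F + pa F * (pb F + pc F - pa F)) ⊗ₜ[F] uz F
    + (pb F - pc F) ⊗ₜ[F] (ux F * uy F)
    + (pc F - pa F) ⊗ₜ[F] (uy F * uz F)
    + (pa F - pb F) ⊗ₜ[F] (uz F * ux F)

/-- `R = 2 ⊗ yν_x + 2(c+a-b+1) ⊗ ν_x`. -/
def Rel : T F :=
  (2 : P F) ⊗ₜ[F] (uy F * nux F) + (2 * (pc F + pa F - pb F + 1)) ⊗ₜ[F] nux F

/-- `L = -2 ⊗ yν_z - 2(a-b-c-1) ⊗ ν_z`. -/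
def Lel : T F :=
  -((2 : P F) ⊗ₜ[F] (uy F * nuz F)) - (2 * (pa F - pb F - pc F - 1)) ⊗ₜ[F] nuz F

/-- `θ = 1⊗y - b⊗1`. -/
def theta : T F := (1 : P F) ⊗ₜ[F] uy F - pb F ⊗ₜ[F] (1 : U F)

/-- `ϑ = 1⊗y + a⊗1`. -/
def vartheta : T F := (1 : P F) ⊗ₜ[F] uy F + pa F ⊗ₜ[F] (1 : U F)

/-- `F[a,b,c] ⊗ U_n` as a subspace of `F[a,b,c] ⊗ U(sl₂)`. -/
def TU (n : ℤ) : Submodule F (T F) :=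
  Submodule.span F {t : T F | ∃ (p : P F) (u : U F), u ∈ Usub F n ∧ t = p ⊗ₜ[F] u}


lemma hf_rel : h F * f F = f F * h F - (2:F) • f F := by
  have := RingQuot.mkAlgHom_rel F (slRel.hf (F := F))
  simp only [map_sub, map_mul, map_neg, map_ofNat] at this
  rw [← f, ← h] at this
  have h2 : h F * f F - f F * h F = -(2 * f F) := by simpa using this
  have hs : (2:F) • f F = 2 * f F := by rw [two_smul, two_mul]
  rw [hs]
  have h3 := eq_add_of_sub_eq h2
  rw [h3]; abel

lemma he_rel : h F * e F = e F * h F + (2:F) • e F := by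
  have := RingQuot.mkAlgHom_rel F (slRel.he (F := F))
  simp only [map_sub, map_mul, map_ofNat] at this
  rw [← e, ← h] at this
  have hs : (2:F) • e F = 2 * e F := by rw [two_smul, two_mul]
  rw [hs]
  have h3 := eq_add_of_sub_eq this
  rw [h3]; abel

lemma twoP : (2 : P F) = (2:F) • (1 : P F) := by
  rw [two_smul]; norm_num

lemma xy_eq : ux F * uy F =
    -((2:F)⁻¹ • (f F * h F)) - ((2:F)⁻¹ * (2:F)⁻¹) • (h F * h F) := by
  rw [ux, uy]
  simp only [sub_mul, neg_mul, mul_neg, smul_mul_assoc, mul_smul_comm, smul_smul, smul_neg]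
  rw [neg_mul (f F) (h F)]
  module

lemma yy_eq : uy F * uy F = ((2:F)⁻¹ * (2:F)⁻¹) • (h F * h F) := by
  rw [uy]
  simp only [smul_mul_assoc, mul_smul_comm, smul_smul]

lemma ynux_eq : uy F * nux F =
    ((2:F)⁻¹ * (2:F)⁻¹) • (f F * h F) - ((2:F)⁻¹ * (2:F)⁻¹ * 2) • f F := by
  rw [uy, nux]
  simp only [smul_mul_assoc, mul_smul_comm, smul_smul, hf_rel, smul_sub]
  module

lemma yz_eq : uy F * uz F =
    ((2:F)⁻¹ • (e F * h F) + ((2:F)⁻¹ * 2) • e F)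
      - ((2:F)⁻¹ * (2:F)⁻¹) • (h F * h F) := by
  rw [uy, uz]
  simp only [mul_sub, smul_mul_assoc, mul_smul_comm, smul_smul, he_rel, smul_add]

lemma ynuz_eq : uy F * nuz F =
    ((2:F)⁻¹ * (2:F)⁻¹) • (e F * h F) + ((2:F)⁻¹ * (2:F)⁻¹ * 2) • e F := by
  rw [uy, nuz]
  simp only [smul_mul_assoc, mul_smul_comm, smul_smul, he_rel, smul_add]
  module

lemma sub_mul_expand {R : Type*} [Ring R] (x y z : R) :
    (x - y) * (x - z) = x * x - y * x - x * z + y * z := by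
  noncomm_ring

set_option maxHeartbeats 1000000 in
theorem statement13 (hchar : (2 : F) ≠ 0) :
    Anat F =
      ((1 : P F) ⊗ₜ[F] uy F + pa F ⊗ₜ[F] (1 : U F)) *
          ((1 : P F) ⊗ₜ[F] uy F + (pa F + 1) ⊗ₜ[F] (1 : U F))
        + (2 : P F) ⊗ₜ[F] (uy F * nux F)
        + (2 * (pc F + pa F - pb F + 1)) ⊗ₜ[F] nux F ∧
    Bnat F =
      ((1 : P F) ⊗ₜ[F] uy F - pb F ⊗ₜ[F] (1 : U F)) *
          ((1 : P F) ⊗ₜ[F] uy F - (pb F + 1) ⊗ₜ[F] (1 : U F))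
        - (2 : P F) ⊗ₜ[F] (uy F * nuz F)
        - (2 * (pa F - pb F - pc F - 1)) ⊗ₜ[F] nuz F := by
  constructor
  · rw [Anat, twoP, ynux_eq, xy_eq]
    rw [ux, uy, nux]
    simp only [Algebra.TensorProduct.tmul_mul_tmul, mul_add, add_mul, one_mul, mul_one,
      smul_mul_assoc, mul_smul_comm, TensorProduct.tmul_add, TensorProduct.tmul_sub,
      TensorProduct.tmul_neg, TensorProduct.add_tmul, TensorProduct.sub_tmul,
      TensorProduct.neg_tmul, TensorProduct.tmul_smul, TensorProduct.smul_tmul,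
      smul_add, smul_sub, smul_neg, smul_smul]
    match_scalars <;> (try field_simp) <;> (try ring)
  · rw [Bnat, twoP, ynuz_eq, yz_eq,
      sub_mul_expand ((1 : P F) ⊗ₜ[F] uy F) (pb F ⊗ₜ[F] (1 : U F))
        ((pb F + 1) ⊗ₜ[F] (1 : U F))]
    rw [uy, uz, nuz]
    simp only [Algebra.TensorProduct.tmul_mul_tmul, mul_add, add_mul, one_mul, mul_one,
      smul_mul_assoc, mul_smul_comm, TensorProduct.tmul_add, TensorProduct.tmul_sub,
      TensorProduct.tmul_neg, TensorProduct.add_tmul, TensorProduct.sub_tmul,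
      TensorProduct.neg_tmul, TensorProduct.tmul_smul, TensorProduct.smul_tmul,
      smul_add, smul_sub, smul_neg, smul_smul]
    match_scalars <;> (try field_simp) <;> (try ring)


end RacahPaper
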